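/- Let V be a real Banach space, H a real Hilbert space, e : V → H a continuous linear map, and define j : V → V* by j(x)(v) := (e v, e x)_H. Let r ∈ ℕ, let A : V → V* and B¹, …, Bʳ : V → H, let K ≥ 0 and γ > 0, and suppose that for all x, y ∈ V: 2⟨x − y, A(x) − A(y)⟩ + Σ_{j=1}^r ‖Bʲ(x) − Bʲ(y)‖_H² ≤ K‖e(x − y)‖_H². Define Ā(x) := γ^{−1} A(γ x) − (K/2) j(x) and B̄ʲ(x) := γ^{−1} Bʲ(γ x). Then for all x, y ∈ V: 2⟨x − y, Ā(x) − Ā(y)⟩ + Σ_{j=1}^r ‖B̄ʲ(x) − B̄ʲ(y)‖_H² ≤ 0. -/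

import Mathlib

/-- Rescaling reduces the weakened monotonicity condition (C1bis) to the monotonicity
condition (C1): if `(A, B)` satisfies (C1bis) with constant `K`, then
`Ā(x) := γ⁻¹ A(γx) − (K/2) j(x)`, `B̄ʲ(x) := γ⁻¹ Bʲ(γx)` satisfies (C1). -/
theorem stmt_6
    {V H : Type*} [NormedAddCommGroup V] [NormedSpace ℝ V]
    [NormedAddCommGroup H] [InnerProductSpace ℝ H]
    (e : V →L[ℝ] H)
    (j : V → V →L[ℝ] ℝ) (hj : ∀ x v : V, j x v = (inner ℝ (e v) (e x) : ℝ))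
    (r : ℕ) (A : V → V →L[ℝ] ℝ) (B : Fin r → V → H)
    (K γ : ℝ) (hK : 0 ≤ K) (hγ : 0 < γ)
    (hmono : ∀ x y : V,
      2 * (A x - A y) (x - y) + ∑ i, ‖B i x - B i y‖ ^ 2 ≤ K * ‖e (x - y)‖ ^ 2) :
    ∀ x y : V,
      2 * (((γ⁻¹ • A (γ • x) - (K / 2) • j x) -
            (γ⁻¹ • A (γ • y) - (K / 2) • j y)) (x - y)) +
        ∑ i, ‖γ⁻¹ • B i (γ • x) - γ⁻¹ • B i (γ • y)‖ ^ 2 ≤ 0 := by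
  intro x y
  have hγ0 : γ ≠ 0 := ne_of_gt hγ
  have key := hmono (γ • x) (γ • y)
  have hsub : γ • x - γ • y = γ • (x - y) := (smul_sub γ x y).symm
  -- rewrite the A term in key
  have hA : (A (γ • x) - A (γ • y)) (γ • x - γ • y)
      = γ * (A (γ • x) - A (γ • y)) (x - y) := by
    rw [hsub, ContinuousLinearMap.map_smul]; simp
  have he : ‖e (γ • x - γ • y)‖ ^ 2 = γ ^ 2 * ‖e (x - y)‖ ^ 2 := by
    rw [hsub, map_smul, norm_smul]
    simp [mul_pow, abs_of_pos hγ]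
  rw [hA, he] at key
  -- j term
  have hjterm : (j x - j y) (x - y) = ‖e (x - y)‖ ^ 2 := by
    have : (j x - j y) (x - y) = (inner ℝ (e (x - y)) (e x) : ℝ) - inner ℝ (e (x - y)) (e y) := by
      simp [hj]
    rw [this, ← inner_sub_right, ← map_sub, real_inner_self_eq_norm_sq]
  -- B terms
  have hB : ∀ i : Fin r, ‖γ⁻¹ • B i (γ • x) - γ⁻¹ • B i (γ • y)‖ ^ 2
      = γ⁻¹ ^ 2 * ‖B i (γ • x) - B i (γ • y)‖ ^ 2 := by
    intro i
    rw [← smul_sub, norm_smul]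
    simp [mul_pow, abs_of_pos (inv_pos.mpr hγ)]
  have hLHS :
      2 * (((γ⁻¹ • A (γ • x) - (K / 2) • j x) -
            (γ⁻¹ • A (γ • y) - (K / 2) • j y)) (x - y))
      = 2 * γ⁻¹ * ((A (γ • x) - A (γ • y)) (x - y)) - K * ‖e (x - y)‖ ^ 2 := by
    have : ((γ⁻¹ • A (γ • x) - (K / 2) • j x) -
            (γ⁻¹ • A (γ • y) - (K / 2) • j y)) (x - y)
        = γ⁻¹ * (A (γ • x)) (x - y) - (K / 2) * (j x) (x - y)
          - (γ⁻¹ * (A (γ • y)) (x - y) - (K / 2) * (j y) (x - y)) := by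
      simp [ContinuousLinearMap.sub_apply, ContinuousLinearMap.smul_apply]
    rw [this]
    have h2 : (j x) (x - y) - (j y) (x - y) = ‖e (x - y)‖ ^ 2 := by
      simpa [ContinuousLinearMap.sub_apply] using hjterm
    have h3 : (A (γ • x) - A (γ • y)) (x - y)
        = (A (γ • x)) (x - y) - (A (γ • y)) (x - y) := by
      simp [ContinuousLinearMap.sub_apply]
    rw [h3]
    linear_combination (-K) * h2
  rw [hLHS]
  rw [Finset.sum_congr rfl (fun i _ => hB i), ← Finset.mul_sum]
  -- from key: 2 * γ * T + S ≤ K γ² E, want 2γ⁻¹ T - K E + γ⁻² S ≤ 0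
  have hS : 0 ≤ ∑ i, ‖B i (γ • x) - B i (γ • y)‖ ^ 2 :=
    Finset.sum_nonneg fun i _ => sq_nonneg _
  have hγ2 : (0:ℝ) < γ ^ 2 := by positivity
  have hinv : γ⁻¹ ^ 2 * γ ^ 2 = 1 := by field_simp
  have h := mul_le_mul_of_nonneg_left key (by positivity : (0:ℝ) ≤ γ⁻¹ ^ 2)
  have e1 : γ⁻¹ ^ 2 * (2 * (γ * (A (γ • x) - A (γ • y)) (x - y)))
      = 2 * γ⁻¹ * (A (γ • x) - A (γ • y)) (x - y) := by
    field_simp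
  have e2 : γ⁻¹ ^ 2 * (K * (γ ^ 2 * ‖e (x - y)‖ ^ 2)) = K * ‖e (x - y)‖ ^ 2 := by
    field_simp
  rw [mul_add, e1, e2] at h
  linarith
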